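/- For P > 0, if T is exponentially distributed with density f(t) = exp(−t) for t ≥ 0, then E[log₂(T + 1/P)] = −log₂(P) − (1/ln 2)·exp(1/P)·Ei(−1/P), where Ei(z) = −∫_{−z}^∞ (exp(−t)/t) dt is the exponential integral. -/

import Mathlib

open MeasureTheory Real Set Filter Asymptotics

/-- The exponential integral Ei(z) = −∫_{−z}^∞ exp(−t)/t dt. -/
noncomputable def expIntegralEi (z : ℝ) : ℝ := - ∫ t in Ioi (-z), Real.exp (-t) / t

lemma tendsto_log_mul_exp_neg (a c : ℝ) (ha : 0 < a) (hc : 0 < c) :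
    Tendsto (fun x => Real.log (x + a) * Real.exp (-(c * x))) atTop (nhds 0) := by
  have hupper : Tendsto (fun x : ℝ => (x + a) * Real.exp (-(c * x))) atTop (nhds 0) := by
    have h1 : Tendsto (fun x : ℝ => x * Real.exp (-(c * x))) atTop (nhds 0) := by
      have := tendsto_rpow_mul_exp_neg_mul_atTop_nhds_zero 1 c hc
      simpa [Real.rpow_one, neg_mul] using this
    have h2 : Tendsto (fun x : ℝ => a * Real.exp (-(c * x))) atTop (nhds 0) := by
      have : Tendsto (fun x : ℝ => Real.exp (-(c * x))) atTop (nhds 0) :=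
        Real.tendsto_exp_atBot.comp (tendsto_neg_atTop_atBot.comp (tendsto_id.const_mul_atTop hc))
      simpa using this.const_mul a
    have := h1.add h2
    simpa [add_mul] using this
  apply squeeze_zero' (g := fun x : ℝ => (x + a) * Real.exp (-(c * x))) ?_ ?_ hupper
  · filter_upwards [eventually_ge_atTop (1 - a)] with x hx
    have h1 : (1:ℝ) ≤ x + a := by linarith
    exact mul_nonneg (Real.log_nonneg h1) (Real.exp_pos _).le
  · filter_upwards [eventually_ge_atTop (0 : ℝ)] with x hx
    have h0 : 0 < x + a := by linarith
    have := Real.log_le_sub_one_of_pos h0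
    have hle : Real.log (x + a) ≤ x + a := by linarith
    exact mul_le_mul_of_nonneg_right hle (Real.exp_pos _).le

lemma integrableOn_log_mul_exp (a : ℝ) (ha : 0 < a) :
    IntegrableOn (fun t => Real.log (t + a) * Real.exp (-t)) (Ioi (0:ℝ)) := by
  apply integrable_of_isBigO_exp_neg (b := 1/2) (by norm_num)
  · apply ContinuousOn.mul _ (Real.continuous_exp.comp continuous_neg).continuousOn
    exact ((continuous_id.add continuous_const).continuousOn).log
      (fun x hx => by simp only [mem_Ici, id] at hx ⊢; exact (show (0:ℝ) < x + a by linarith).ne')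
  · have h := tendsto_log_mul_exp_neg a (1/2) ha (by norm_num)
    rw [Asymptotics.isBigO_iff]
    refine ⟨1, ?_⟩
    have hev := h.eventually (Metric.ball_mem_nhds (0:ℝ) one_pos)
    filter_upwards [hev] with x hx
    simp only [Metric.mem_ball, Real.dist_eq, sub_zero] at hx
    have hsplit : Real.exp (-x) = Real.exp (-(1/2 * x)) * Real.exp (-(1/2 * x)) := by
      rw [← Real.exp_add]; ring_nf
    rw [hsplit]
    calc |Real.log (x + a) * (Real.exp (-(1/2 * x)) * Real.exp (-(1/2 * x)))|
        = |Real.log (x + a) * Real.exp (-(1/2 * x))| * |Real.exp (-(1/2 * x))| := by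
          rw [← abs_mul]; ring_nf
      _ ≤ 1 * ‖Real.exp (-(1/2) * x)‖ := by
          apply mul_le_mul hx.le (le_of_eq ?_) (abs_nonneg _) zero_le_one
          rw [Real.norm_eq_abs]; ring_nf
    
lemma integrableOn_exp_div (a : ℝ) (ha : 0 < a) :
    IntegrableOn (fun t => Real.exp (-t) / (t + a)) (Ioi (0:ℝ)) := by
  apply integrable_of_isBigO_exp_neg (b := 1) one_pos
  · apply ContinuousOn.div (Real.continuous_exp.comp continuous_neg).continuousOn
      (continuous_id.add continuous_const).continuousOn
    intro x hx
    simp only [mem_Ici] at hx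
    exact (show (0:ℝ) < x + a by linarith).ne'
  · rw [Asymptotics.isBigO_iff]
    refine ⟨1/a, ?_⟩
    filter_upwards [eventually_ge_atTop (0:ℝ)] with x hx
    have hxa : 0 < x + a := by linarith
    rw [Real.norm_eq_abs, Real.norm_eq_abs, abs_div, abs_of_pos (Real.exp_pos _),
      abs_of_pos hxa, abs_of_pos (Real.exp_pos _), neg_one_mul]
    rw [div_le_iff₀ hxa] at *
    calc Real.exp (-x) = Real.exp (-x) * 1 := by ring
      _ ≤ 1/a * Real.exp (-x) * (x + a) := by
          rw [div_mul_eq_mul_div, one_mul, div_mul_eq_mul_div, le_div_iff₀ ha]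
          nlinarith [Real.exp_pos (-x), hx]

lemma ftc_step (a : ℝ) (ha : 0 < a) :
    (∫ t in Ioi (0:ℝ), Real.log (t + a) * Real.exp (-t))
      - ∫ t in Ioi (0:ℝ), Real.exp (-t) / (t + a) = Real.log a := by
  have key : ∫ t in Ioi (0:ℝ),
      (Real.log (t + a) * Real.exp (-t) - Real.exp (-t) / (t + a))
      = (0:ℝ) - (-(Real.exp (-(0:ℝ)) * Real.log ((0:ℝ) + a))) := by
    apply integral_Ioi_of_hasDerivAt_of_tendsto'
      (f := fun x => -(Real.exp (-x) * Real.log (x + a)))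
    · intro x hx
      simp only [mem_Ici] at hx
      have hxa : 0 < x + a := by linarith
      have h1 : HasDerivAt (fun x : ℝ => Real.exp (-x)) (-Real.exp (-x)) x := by
        simpa [Function.comp_def] using (Real.hasDerivAt_exp (-x)).comp x ((hasDerivAt_id x).neg)
      have h2 : HasDerivAt (fun x : ℝ => Real.log (x + a)) ((x + a)⁻¹) x := by
        simpa [Function.comp_def] using (Real.hasDerivAt_log hxa.ne').comp x ((hasDerivAt_id x).add_const a)
      have := (h1.mul h2).neg
      convert this using 1
      · rfl
      · ring
    · exact ((integrableOn_log_mul_exp a ha).sub (integrableOn_exp_div a ha))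
    · have h := tendsto_log_mul_exp_neg a 1 ha one_pos
      have : Tendsto (fun x => -(Real.exp (-x) * Real.log (x + a))) atTop (nhds (-0)) := by
        apply Tendsto.neg
        apply h.congr
        intro x; rw [one_mul]; ring
      simpa using this
  rw [← integral_sub (integrableOn_log_mul_exp a ha) (integrableOn_exp_div a ha), key]
  simp

lemma translate_step (a : ℝ) (ha : 0 < a) :
    ∫ t in Ioi (0:ℝ), Real.exp (-t) / (t + a)
      = Real.exp a * ∫ u in Ioi a, Real.exp (-u) / u := by
  have h1 : ∀ t : ℝ, Real.exp (-t) / (t + a)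
      = Real.exp a * (Real.exp (-(t + a)) / (t + a)) := by
    intro t
    have hone : Real.exp a * Real.exp (-a) = 1 := by rw [← Real.exp_add]; simp
    rw [neg_add, Real.exp_add,
      show Real.exp a * (Real.exp (-t) * Real.exp (-a) / (t + a))
        = Real.exp a * Real.exp (-a) * (Real.exp (-t) / (t + a)) from by ring, hone, one_mul]
  simp_rw [h1]
  rw [integral_const_mul]
  congr 1
  have h2 : ∫ t in Ioi (0:ℝ), Real.exp (-(t + a)) / (t + a)
      = ∫ t, (Ioi a).indicator (fun u => Real.exp (-u) / u) (t + a) := by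
    rw [← integral_indicator measurableSet_Ioi]
    congr 1
    funext t
    by_cases ht : t ∈ Ioi (0:ℝ)
    · rw [indicator_of_mem ht, indicator_of_mem (by simp at ht ⊢; linarith)]
    · rw [indicator_of_notMem ht, indicator_of_notMem (by simp at ht ⊢; linarith)]
  rw [h2, integral_add_right_eq_self, integral_indicator measurableSet_Ioi]

/-- If T has the standard exponential density exp(−t), t ≥ 0, then for P > 0,
E[log₂(T + 1/P)] = −log₂ P − (1/ln 2)·exp(1/P)·Ei(−1/P). -/
theorem exponential_expectation_log (P : ℝ) (hP : 0 < P) :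
    ∫ t in Ioi (0:ℝ), Real.logb 2 (t + 1/P) * Real.exp (-t)
      = - Real.logb 2 P - (1 / Real.log 2) * Real.exp (1/P) * expIntegralEi (-(1/P)) := by
  set a : ℝ := 1/P with ha_def
  have ha : 0 < a := by positivity
  have hEi : expIntegralEi (-(1/P)) = - ∫ t in Ioi a, Real.exp (-t) / t := by
    rw [expIntegralEi, neg_neg]
  have hlogb : ∀ t : ℝ, Real.logb 2 (t + a) = (1 / Real.log 2) * Real.log (t + a) := by
    intro t; rw [Real.logb, div_eq_mul_inv, one_div, mul_comm]
  have hmain := ftc_step a ha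
  have htrans := translate_step a ha
  calc ∫ t in Ioi (0:ℝ), Real.logb 2 (t + 1/P) * Real.exp (-t)
      = ∫ t in Ioi (0:ℝ), (1 / Real.log 2) * (Real.log (t + a) * Real.exp (-t)) := by
        congr 1; funext t; rw [hlogb]; ring
    _ = (1 / Real.log 2) * ∫ t in Ioi (0:ℝ), Real.log (t + a) * Real.exp (-t) := by
        rw [integral_const_mul]
    _ = (1 / Real.log 2) * (Real.log a + ∫ t in Ioi (0:ℝ), Real.exp (-t) / (t + a)) := by
        rw [← hmain, sub_add_cancel]
    _ = - Real.logb 2 P - (1 / Real.log 2) * Real.exp (1/P) * expIntegralEi (-(1/P)) := by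
        rw [htrans, hEi]
        have hlogA : Real.log a = - Real.log P := by
          rw [ha_def, one_div, Real.log_inv]
        rw [hlogA, Real.logb, ha_def]
        ring
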